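/- Let l be a list of simple coins with probabilities in [0,1] and nonnegative fees, let E be a real penalty, and for j ∈ ℕ let M(l, j) denote the minimum of COST(s, E) over all (order-preserving) sublists s of l of length at most j (the empty sublist having cost E). Then M satisfies: M(nil, j) = E for all j; M(l, 0) = E for all l; and M(c :: l, j+1) = min( M(l, j+1), μ_c + (1−P_c)·M(l, j) ), where c = (P_c, μ_c). (This is the correctness of the dynamic-programming recurrence for at most k tosses of one-time coins.) -/

import Mathlib

/-- Expected cost of tossing a list of simple coins `(P, μ)` in order,
paying the penalty `E` if all tosses fail. -/
noncomputable def listCost (l : List (ℝ × ℝ)) (E : ℝ) : ℝ :=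
  l.foldr (fun c a => c.2 + (1 - c.1) * a) E

/-- Correctness of the dynamic-programming recurrence for at most `k` tosses of
one-time coins: if `M l j` is the minimum of `COST(s, E)` over all order-preserving
sublists `s` of `l` of length at most `j`, then `M nil j = E`, `M l 0 = E`, and
`M (c :: l) (j+1) = min (M l (j+1)) (μ_c + (1 - P_c) · M l j)` whenever the coins
of `c :: l` have probabilities in `[0,1]` and nonnegative fees. -/
theorem dynamic_programming_recurrence
    (E : ℝ) (M : List (ℝ × ℝ) → ℕ → ℝ)
    (hM : ∀ (l : List (ℝ × ℝ)) (j : ℕ),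
      (∃ s, s.Sublist l ∧ s.length ≤ j ∧ listCost s E = M l j) ∧
      (∀ s, s.Sublist l → s.length ≤ j → M l j ≤ listCost s E)) :
    (∀ j : ℕ, M [] j = E) ∧
    (∀ l : List (ℝ × ℝ), M l 0 = E) ∧
    (∀ (c : ℝ × ℝ) (l : List (ℝ × ℝ)) (j : ℕ),
      (∀ d ∈ c :: l, 0 ≤ d.1 ∧ d.1 ≤ 1 ∧ 0 ≤ d.2) →
      M (c :: l) (j + 1) = min (M l (j + 1)) (c.2 + (1 - c.1) * M l j)) := by
  refine ⟨?_, ?_, ?_⟩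
  · intro j
    obtain ⟨⟨s, hs, _, hcost⟩, hle⟩ := hM [] j
    have : s = [] := List.sublist_nil.mp hs
    subst this
    exact hcost.symm ▸ rfl
  · intro l
    obtain ⟨⟨s, hs, hlen, hcost⟩, hle⟩ := hM l 0
    have : s = [] := List.length_eq_zero_iff.mp (Nat.le_zero.mp hlen)
    subst this
    exact hcost.symm ▸ rfl
  · intro c l j hd
    have h1P : (0:ℝ) ≤ 1 - c.1 := by
      have := (hd c (List.mem_cons_self)).2.1
      linarith
    obtain ⟨⟨s, hs, hlen, hcost⟩, hle⟩ := hM (c :: l) (j + 1)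
    obtain ⟨⟨s1, hs1, hlen1, hcost1⟩, hle1⟩ := hM l (j + 1)
    obtain ⟨⟨s0, hs0, hlen0, hcost0⟩, hle0⟩ := hM l j
    apply le_antisymm
    · apply le_min
      · rw [← hcost1]
        exact hle s1 (hs1.trans (List.sublist_cons_self c l)) hlen1
      · have : listCost (c :: s0) E = c.2 + (1 - c.1) * M l j := by
          rw [← hcost0]; rfl
        rw [← this]
        exact hle (c :: s0) (List.cons_sublist_cons.mpr hs0)
          (by simpa using Nat.succ_le_succ hlen0)
    · rcases List.sublist_cons_iff.mp hs with h | ⟨t, rfl, ht⟩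
      · calc min (M l (j+1)) (c.2 + (1 - c.1) * M l j) ≤ M l (j+1) := min_le_left _ _
          _ ≤ listCost s E := hle1 s h hlen
          _ = M (c :: l) (j+1) := hcost
      · have hMt : M l j ≤ listCost t E :=
          hle0 t ht (by simpa using Nat.le_of_succ_le_succ hlen)
        calc min (M l (j+1)) (c.2 + (1 - c.1) * M l j)
            ≤ c.2 + (1 - c.1) * M l j := min_le_right _ _
          _ ≤ c.2 + (1 - c.1) * listCost t E := by nlinarith
          _ = listCost (c :: t) E := rfl
          _ = M (c :: l) (j+1) := hcost
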